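/- arXiv:1510.00579 — 2 statements merged into one kernel-verified Lean document; each statement's English description precedes it below -/
import Mathlib

section
/- Let ξ_1, ξ_2, … be independent Bernoulli variables with P(ξ_i=1)=p_i ∈ (0,1), and D = min{n : ξ_n = ⋯ = ξ_{n+ℓ-1} = 1} the start of the first run of ℓ ones. Then P(D = n+1) = q_n · P(D > n−ℓ) · ∏_{j=n+1}^{n+ℓ} p_j, where q_n = 1 − p_n. -/
open MeasureTheory Set Filter
open scoped ENNReal

/-- `ξ 1, ξ 2, …` are independent Bernoulli variables with success
probabilities `p i ∈ (0,1)` (the value `ξ 0` is irrelevant). -/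
structure IsBernoulliSeq {Ω : Type*} [MeasurableSpace Ω] (P : Measure Ω)
    (p : ℕ → ℝ) (ξ : ℕ → Ω → Bool) : Prop where
  meas : ∀ i, Measurable (ξ i)
  indep : ProbabilityTheory.iIndepFun ξ P
  prob : ∀ i, 1 ≤ i → P {ω | ξ i ω = true} = ENNReal.ofReal (p i)
  range : ∀ i, 1 ≤ i → 0 < p i ∧ p i < 1

/-- `D`, the index of the start of the first run of `ℓ` consecutive ones
(indices start at 1); equals `⊤` if no such run occurs. -/
noncomputable def runTime {Ω : Type*} (ξ : ℕ → Ω → Bool) (ℓ : ℕ) (ω : Ω) : ℕ∞ :=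
  sInf {x : ℕ∞ | ∃ n : ℕ, x = (n : ℕ∞) ∧ 1 ≤ n ∧ ∀ j < ℓ, ξ (n + j) ω = true}

/-- The tail probability `P(D > m)`, with the convention that it equals `1`
for `m ≤ 0`. -/
noncomputable def runTail {Ω : Type*} [MeasurableSpace Ω] (P : Measure Ω)
    (D : Ω → ℕ∞) (m : ℤ) : ℝ≥0∞ :=
  if m ≤ 0 then 1 else P {ω | (m.toNat : ℕ∞) < D ω}

lemma runTime_gt_iff {Ω : Type*} (ξ : ℕ → Ω → Bool) (ℓ : ℕ) (ω : Ω) (m : ℕ) :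
    (m : ℕ∞) < runTime ξ ℓ ω ↔
      ∀ k, 1 ≤ k → k ≤ m → ¬ (∀ j < ℓ, ξ (k + j) ω = true) := by
  unfold runTime
  constructor
  · intro h k hk1 hkm hrun
    have hmem : (k : ℕ∞) ∈ {x : ℕ∞ | ∃ n : ℕ, x = (n : ℕ∞) ∧ 1 ≤ n ∧ ∀ j < ℓ, ξ (n + j) ω = true} :=
      ⟨k, rfl, hk1, hrun⟩
    have hle := sInf_le hmem
    have : (m : ℕ∞) < (k : ℕ∞) := lt_of_lt_of_le h hle
    exact absurd (Nat.cast_le.mpr hkm) (not_le.mpr this)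
  · intro h
    have hle : ((m + 1 : ℕ) : ℕ∞) ≤ sInf {x : ℕ∞ | ∃ n : ℕ, x = (n : ℕ∞) ∧ 1 ≤ n ∧ ∀ j < ℓ, ξ (n + j) ω = true} := by
      apply le_sInf
      rintro x ⟨k, rfl, hk1, hrun⟩
      have hmk : m < k := by
        by_contra hc
        exact h k hk1 (le_of_not_gt hc) hrun
      exact_mod_cast hmk
    calc (m : ℕ∞) < ((m + 1 : ℕ) : ℕ∞) := by exact_mod_cast Nat.lt_succ_self m
      _ ≤ _ := hle

lemma runTime_eq_iff {Ω : Type*} (ξ : ℕ → Ω → Bool) (ℓ : ℕ) (ω : Ω) (m : ℕ) (hm : 1 ≤ m) :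
    runTime ξ ℓ ω = (m : ℕ∞) ↔
      (∀ j < ℓ, ξ (m + j) ω = true) ∧
        ∀ k, 1 ≤ k → k < m → ¬ (∀ j < ℓ, ξ (k + j) ω = true) := by
  unfold runTime
  constructor
  · intro h
    have hno : ∀ k, 1 ≤ k → k < m → ¬ (∀ j < ℓ, ξ (k + j) ω = true) := by
      intro k hk1 hkm hrun
      have hmem : (k : ℕ∞) ∈ {x : ℕ∞ | ∃ n : ℕ, x = (n : ℕ∞) ∧ 1 ≤ n ∧ ∀ j < ℓ, ξ (n + j) ω = true} :=
        ⟨k, rfl, hk1, hrun⟩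
      have hle := sInf_le hmem
      rw [h] at hle
      exact absurd (Nat.cast_le.mp hle) (not_le.mpr hkm)
    refine ⟨?_, hno⟩
    by_contra hrun
    have hle : ((m + 1 : ℕ) : ℕ∞) ≤ sInf {x : ℕ∞ | ∃ n : ℕ, x = (n : ℕ∞) ∧ 1 ≤ n ∧ ∀ j < ℓ, ξ (n + j) ω = true} := by
      apply le_sInf
      rintro x ⟨k, rfl, hk1, hr⟩
      have : m + 1 ≤ k := by
        rcases lt_trichotomy k m with hlt | heq | hgt
        · exact absurd hr (hno k hk1 hlt)
        · exact absurd hr (heq ▸ hrun)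
        · omega
      exact_mod_cast this
    rw [h] at hle
    exact absurd (Nat.cast_le.mp hle) (by omega)
  · rintro ⟨hrun, hno⟩
    refine le_antisymm (sInf_le ⟨m, rfl, hm, hrun⟩) ?_
    apply le_sInf
    rintro x ⟨k, rfl, hk1, hr⟩
    have : m ≤ k := by
      by_contra hc
      exact hno k hk1 (by omega) hr
    exact_mod_cast this



/-- Corollary 7.1(i): `P(D = n+1) = q_n P(D > n−ℓ) ∏_{j=n+1}^{n+ℓ} p_j`. -/
theorem stmt_16 {Ω : Type*} [MeasurableSpace Ω] (P : Measure Ω) [IsProbabilityMeasure P]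
    (p : ℕ → ℝ) (ξ : ℕ → Ω → Bool) (hξ : IsBernoulliSeq P p ξ)
    (ℓ : ℕ) (hℓ : 1 ≤ ℓ) (n : ℕ) (hn : 1 ≤ n) :
    P {ω | runTime ξ ℓ ω = ((n + 1 : ℕ) : ℕ∞)} =
      ENNReal.ofReal (1 - p n) * runTail P (runTime ξ ℓ) ((n : ℤ) - ℓ) *
        ∏ j ∈ Finset.Icc (n + 1) (n + ℓ), ENNReal.ofReal (p j) := by
  classical
  set S : Finset ℕ := Finset.Icc 1 (n - 1) with hSdef
  set T : Finset ℕ := Finset.Icc n (n + ℓ) with hTdef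
  have hST : Disjoint S T := by
    simp only [hSdef, hTdef, Finset.disjoint_left, Finset.mem_Icc]
    omega
  set A : Set (↥S → Bool) :=
    {x | ∀ k ∈ Finset.Icc 1 (n - ℓ), ¬ ∀ j < ℓ, ∀ h : (k + j) ∈ S, x ⟨k + j, h⟩ = true}
    with hAdef
  set B : Set (↥T → Bool) :=
    {x | ∀ i : ↥T, x i = (if (i : ℕ) = n then false else true)} with hBdef
  have hAm : MeasurableSet A := (Set.to_countable A).measurableSet
  have hBm : MeasurableSet B := (Set.to_countable B).measurableSet
  -- the preimage of A is the "no early run" event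
  have hE : (fun ω (i : ↥S) => ξ i ω) ⁻¹' A
      = {ω | ∀ k, 1 ≤ k → k ≤ n - ℓ → ¬ ∀ j < ℓ, ξ (k + j) ω = true} := by
    ext ω
    simp only [hAdef, mem_preimage, mem_setOf_eq, Finset.mem_Icc]
    constructor
    · intro h k hk1 hk2 hrun
      exact h k ⟨hk1, hk2⟩ (fun j hj _ => hrun j hj)
    · rintro h k ⟨hk1, hk2⟩ hrun
      apply h k hk1 hk2
      intro j hj
      have hmem : k + j ∈ S := by
        simp only [hSdef, Finset.mem_Icc]; omega
      exact hrun j hj hmem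
  -- the preimage of B
  have hF : (fun ω (i : ↥T) => ξ i ω) ⁻¹' B
      = ⋂ i ∈ T, ξ i ⁻¹' {if i = n then false else true} := by
    ext ω
    simp only [hBdef, mem_preimage, mem_setOf_eq, Set.mem_iInter, mem_preimage,
      mem_singleton_iff, Subtype.forall]
  -- event identity
  have hEvent : {ω | runTime ξ ℓ ω = ((n + 1 : ℕ) : ℕ∞)}
      = ((fun ω (i : ↥S) => ξ i ω) ⁻¹' A) ∩ ((fun ω (i : ↥T) => ξ i ω) ⁻¹' B) := by
    rw [hE, hF]
    ext ω
    rw [mem_setOf_eq, runTime_eq_iff ξ ℓ ω (n + 1) (by omega)]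
    simp only [mem_inter_iff, mem_setOf_eq, Set.mem_iInter, mem_preimage,
      mem_singleton_iff, hTdef, Finset.mem_Icc, and_imp]
    constructor
    · rintro ⟨hrun, hno⟩
      refine ⟨fun k hk1 hk2 => hno k hk1 (by omega), fun i hi1 hi2 => ?_⟩
      by_cases hin : i = n
      · subst hin
        rw [if_pos rfl]
        by_contra hfalse
        have htrue : ξ i ω = true := by
          revert hfalse; cases (ξ i ω) <;> simp
        apply hno i hn (by omega)
        intro j hj
        rcases Nat.eq_zero_or_pos j with h0 | h0
        · subst h0; simpa using htrue
        · have hh := hrun (j - 1) (by omega)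
          rwa [show i + 1 + (j - 1) = i + j from by omega] at hh
      · rw [if_neg hin]
        have hh := hrun (i - n - 1) (by omega)
        rwa [show n + 1 + (i - n - 1) = i from by omega] at hh
    · rintro ⟨hE', hF'⟩
      constructor
      · intro j hj
        have hh := hF' (n + 1 + j) (by omega) (by omega)
        rwa [if_neg (by omega)] at hh
      · intro k hk1 hk2 hrun
        by_cases hkl : k + ℓ ≤ n
        · exact hE' k hk1 (by omega) hrun
        · have h1 := hrun (n - k) (by omega)
          rw [show k + (n - k) = n from by omega] at h1
          have h2 := hF' n le_rfl (by omega)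
          rw [if_pos rfl] at h2
          rw [h1] at h2
          exact absurd h2 (by simp)
  -- independence: split off the first block
  have hIndep :=
    (hξ.indep.indepFun_finset S T hST hξ.meas).measure_inter_preimage_eq_mul
      (s := A) (t := B) hAm hBm
  -- the B-block factorizes
  have hPF : P (⋂ i ∈ T, ξ i ⁻¹' {if i = n then false else true})
      = ∏ i ∈ T, P (ξ i ⁻¹' {if i = n then false else true}) := by
    refine hξ.indep.meas_biInter (fun i _ => ?_)
    exact ⟨{if i = n then false else true}, (Set.to_countable _).measurableSet, rfl⟩
  -- value of P(E)
  have hPE : P ((fun ω (i : ↥S) => ξ i ω) ⁻¹' A)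
      = runTail P (runTime ξ ℓ) ((n : ℤ) - ℓ) := by
    rw [hE, runTail]
    by_cases hcase : (n : ℤ) - ℓ ≤ 0
    · rw [if_pos hcase]
      have huniv : {ω | ∀ k, 1 ≤ k → k ≤ n - ℓ → ¬ ∀ j < ℓ, ξ (k + j) ω = true} = univ := by
        ext ω
        simp only [mem_setOf_eq, mem_univ, iff_true]
        intro k hk1 hk2 _
        omega
      rw [huniv, measure_univ]
    · rw [if_neg hcase]
      have htn : ((n : ℤ) - ℓ).toNat = n - ℓ := by omega
      congr 1
      ext ω
      rw [mem_setOf_eq, mem_setOf_eq, htn, runTime_gt_iff]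
  -- values of single-coordinate probabilities
  have hTsplit : T = insert n (Finset.Icc (n + 1) (n + ℓ)) := by
    ext x
    simp only [hTdef, Finset.mem_Icc, Finset.mem_insert]
    omega
  have h1 : P (ξ n ⁻¹' {if n = n then false else true}) = ENNReal.ofReal (1 - p n) := by
    rw [if_pos rfl]
    have hcpl : ξ n ⁻¹' {false} = (ξ n ⁻¹' {true})ᶜ := by
      ext ω
      simp only [mem_preimage, mem_singleton_iff, mem_compl_iff]
      cases (ξ n ω) <;> simp
    have hmeas : MeasurableSet (ξ n ⁻¹' {true}) :=
      (hξ.meas n) (measurableSet_singleton true)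
    rw [hcpl, measure_compl hmeas (measure_ne_top _ _), measure_univ]
    have hpre : ξ n ⁻¹' {true} = {ω | ξ n ω = true} := rfl
    rw [hpre, hξ.prob n hn]
    rw [← ENNReal.ofReal_one, ← ENNReal.ofReal_sub _ (hξ.range n hn).1.le]
  have h2 : ∀ i ∈ Finset.Icc (n + 1) (n + ℓ),
      P (ξ i ⁻¹' {if i = n then false else true}) = ENNReal.ofReal (p i) := by
    intro i hi
    rw [Finset.mem_Icc] at hi
    rw [if_neg (by omega)]
    exact hξ.prob i (by omega)
  calc P {ω | runTime ξ ℓ ω = ((n + 1 : ℕ) : ℕ∞)}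
      = P (((fun ω (i : ↥S) => ξ i ω) ⁻¹' A) ∩ ((fun ω (i : ↥T) => ξ i ω) ⁻¹' B)) := by
        rw [hEvent]
    _ = P ((fun ω (i : ↥S) => ξ i ω) ⁻¹' A) * P ((fun ω (i : ↥T) => ξ i ω) ⁻¹' B) := hIndep
    _ = runTail P (runTime ξ ℓ) ((n : ℤ) - ℓ)
          * ∏ i ∈ T, P (ξ i ⁻¹' {if i = n then false else true}) := by
        rw [hPE, hF, hPF]
    _ = runTail P (runTime ξ ℓ) ((n : ℤ) - ℓ)
          * (ENNReal.ofReal (1 - p n)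
              * ∏ i ∈ Finset.Icc (n + 1) (n + ℓ), ENNReal.ofReal (p i)) := by
        rw [hTsplit, Finset.prod_insert (by simp), h1, Finset.prod_congr rfl h2]
    _ = ENNReal.ofReal (1 - p n) * runTail P (runTime ξ ℓ) ((n : ℤ) - ℓ)
          * ∏ j ∈ Finset.Icc (n + 1) (n + ℓ), ENNReal.ofReal (p j) := by
        ring
end

section
/- For independent Bernoulli trials with success probabilities p_i ∈ (0,1): if ∑ q_i < ∞ or I = ∑_{i≥1} q_i ∏_{j=i+1}^{i+ℓ} p_j = ∞, then the first run of ℓ ones occurs in finite time almost surely; otherwise (I < ∞ and ∑ q_i = ∞) the probability of no run of ℓ ones ever occurring is positive. -/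
open MeasureTheory Set Filter
open scoped ENNReal

set_option linter.unusedSectionVars false

section helpers

variable {Ω : Type*} [MeasurableSpace Ω] {P : Measure Ω} [IsProbabilityMeasure P]
  {p : ℕ → ℝ} {ξ : ℕ → Ω → Bool}

/-- membership characterisation of `runTime = ⊤` -/
lemma runTime_eq_top_iff {ℓ : ℕ} {ω : Ω} :
    runTime ξ ℓ ω = ⊤ ↔ ∀ n, 1 ≤ n → ∃ j, j < ℓ ∧ ξ (n + j) ω = false := by
  rw [runTime, sInf_eq_top]
  constructor
  · intro h n hn
    by_contra hc
    push_neg at hc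
    have h2 : ∀ j < ℓ, ξ (n + j) ω = true := by
      intro j hj
      have := hc j hj
      cases hb : ξ (n + j) ω
      · exact absurd hb this
      · rfl
    exact ENat.coe_ne_top n (h (n : ℕ∞) ⟨n, rfl, hn, h2⟩)
  · rintro h x ⟨n, rfl, hn, hrun⟩
    obtain ⟨j, hj, hf⟩ := h n hn
    rw [hrun j hj] at hf
    cases hf

/-- `E` depends only on the coordinates in `S`. -/
def depOn (ξ : ℕ → Ω → Bool) (E : Set Ω) (S : Finset ℕ) : Prop :=
  ∃ V : Set ((i : S) → Bool), E = (fun ω (i : S) => ξ i ω) ⁻¹' V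

lemma depOn_mem {i : ℕ} {b : Bool} {S : Finset ℕ} (hi : i ∈ S) :
    depOn ξ {ω | ξ i ω = b} S :=
  ⟨{v | v ⟨i, hi⟩ = b}, rfl⟩

lemma depOn_compl {E : Set Ω} {S : Finset ℕ} (h : depOn ξ E S) : depOn ξ Eᶜ S := by
  obtain ⟨V, rfl⟩ := h
  exact ⟨Vᶜ, rfl⟩

lemma depOn_biInter {ι : Type*} {t : Finset ι} {E : ι → Set Ω} {S : Finset ℕ}
    (h : ∀ k ∈ t, depOn ξ (E k) S) : depOn ξ (⋂ k ∈ t, E k) S := by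
  choose! V hV using h
  refine ⟨⋂ k ∈ t, V k, ?_⟩
  rw [preimage_iInter₂]
  exact iInter₂_congr hV

lemma depOn_mono {E : Set Ω} {S S' : Finset ℕ} (hS : S ⊆ S') (h : depOn ξ E S) :
    depOn ξ E S' := by
  obtain ⟨V, rfl⟩ := h
  exact ⟨(fun (v : (i : S') → Bool) (i : S) => v ⟨i.1, hS i.2⟩) ⁻¹' V, rfl⟩

/-- events depending on disjoint windows are independent -/
lemma depOn_indep (hξ : IsBernoulliSeq P p ξ) {S T : Finset ℕ} (hST : Disjoint S T)
    {E F : Set Ω} (hE : depOn ξ E S) (hF : depOn ξ F T) :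
    P (E ∩ F) = P E * P F := by
  obtain ⟨V, rfl⟩ := hE
  obtain ⟨W, rfl⟩ := hF
  exact (hξ.indep.indepFun_finset S T hST hξ.meas).measure_inter_preimage_eq_mul
    V W (V.toFinite.measurableSet) (W.toFinite.measurableSet)

/-- product formula for prescribed values -/
lemma meas_biInter_eq (hξ : IsBernoulliSeq P p ξ) (S : Finset ℕ) (b : ℕ → Bool) :
    P (⋂ i ∈ S, {ω | ξ i ω = b i}) = ∏ i ∈ S, P {ω | ξ i ω = b i} :=
  hξ.indep.measure_inter_preimage_eq_mul S (sets := fun i => {b i})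
    (fun _ _ => measurableSet_singleton _)

lemma prob_false (hξ : IsBernoulliSeq P p ξ) {i : ℕ} (hi : 1 ≤ i) :
    P {ω | ξ i ω = false} = ENNReal.ofReal (1 - p i) := by
  have h1 : {ω | ξ i ω = false} = {ω | ξ i ω = true}ᶜ := by
    ext ω; simp
  have hm : MeasurableSet {ω | ξ i ω = true} := hξ.meas i (measurableSet_singleton true)
  rw [h1, prob_compl_eq_one_sub hm, hξ.prob i hi,
    ENNReal.ofReal_sub 1 (hξ.range i hi).1.le, ENNReal.ofReal_one]

end helpers

section h2
variable {Ω : Type*} [MeasurableSpace Ω] {P : Measure Ω} [IsProbabilityMeasure P]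
  {p : ℕ → ℝ} {ξ : ℕ → Ω → Bool}

/-- the event: a zero at `i` followed by `ℓ` ones -/
def runA (ξ : ℕ → Ω → Bool) (ℓ i : ℕ) : Set Ω :=
  ⋂ m ∈ Finset.Icc i (i + ℓ), {ω | ξ m ω = if m = i then false else true}

lemma runA_measurable (hm : ∀ i, Measurable (ξ i)) (ℓ i : ℕ) :
    MeasurableSet (runA ξ ℓ i) :=
  Finset.measurableSet_biInter _ fun m _ => hm m (measurableSet_singleton _)

lemma Icc_split {i ℓ : ℕ} :
    Finset.Icc i (i + ℓ) = insert i (Finset.Icc (i + 1) (i + ℓ)) := by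
  ext m
  simp only [Finset.mem_Icc, Finset.mem_insert]
  omega

lemma prob_runA (hξ : IsBernoulliSeq P p ξ) {ℓ i : ℕ} (hi : 1 ≤ i) :
    P (runA ξ ℓ i)
      = P {ω | ξ i ω = false} * ∏ m ∈ Finset.Icc (i + 1) (i + ℓ), P {ω | ξ m ω = true} := by
  have h := meas_biInter_eq hξ (Finset.Icc i (i + ℓ)) (fun m => if m = i then false else true)
  rw [runA, h, Icc_split, Finset.prod_insert (by simp), if_pos rfl]
  congr 1
  refine Finset.prod_congr rfl fun m hm => ?_
  have : m ≠ i := by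
    have := (Finset.mem_Icc.mp hm).1; omega
  rw [if_neg this]

lemma prob_runA' (hξ : IsBernoulliSeq P p ξ) {ℓ i : ℕ} (hi : 1 ≤ i) :
    P (runA ξ ℓ i)
      = ENNReal.ofReal ((1 - p i) * ∏ j ∈ Finset.Icc (i + 1) (i + ℓ), p j) := by
  rw [prob_runA hξ hi, prob_false hξ hi, ENNReal.ofReal_mul (by linarith [(hξ.range i hi).2]),
    ENNReal.ofReal_prod_of_nonneg (fun j hj => (hξ.range j (by have := (Finset.mem_Icc.mp hj).1; omega)).1.le)]
  congr 1
  exact Finset.prod_congr rfl fun m hm => hξ.prob m (by have := (Finset.mem_Icc.mp hm).1; omega)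

/-- a window event implies a run, hence `runTime ≠ ⊤` -/
lemma runA_subset_ne_top {ℓ i : ℕ} (hℓ : 1 ≤ ℓ) :
    runA ξ ℓ i ⊆ {ω | runTime ξ ℓ ω = ⊤}ᶜ := by
  intro ω hω
  simp only [mem_compl_iff, mem_setOf_eq, runTime_eq_top_iff]
  push_neg
  refine ⟨i + 1, by omega, fun j hj hfalse => ?_⟩
  have hm : i + 1 + j ∈ Finset.Icc i (i + ℓ) := by
    rw [Finset.mem_Icc]; omega
  have := mem_iInter₂.mp hω (i + 1 + j) hm
  simp only [mem_setOf_eq, if_neg (by omega : i + 1 + j ≠ i)] at this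
  rw [this] at hfalse
  cases hfalse

/-- runA depends on its window -/
lemma depOn_runA {ℓ i : ℕ} : depOn ξ (runA ξ ℓ i) (Finset.Icc i (i + ℓ)) :=
  depOn_biInter fun m hm => depOn_mem hm

end h2

/-- products of `1 - aₖ` tend to zero when `∑ aₖ = ∞` -/
lemma prod_one_sub_tendsto (a : ℕ → ℝ≥0∞) (ha : ∀ k, a k ≤ 1) (h : ∑' k, a k = ⊤) :
    Filter.Tendsto (fun K => ∏ k ∈ Finset.range K, (1 - a k)) atTop (nhds 0) := by
  have key : ∀ K, (∏ k ∈ Finset.range K, (1 - a k)) ≤ (1 + ∑ k ∈ Finset.range K, a k)⁻¹ := by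
    intro K
    have h1 : (∏ k ∈ Finset.range K, (1 - a k)) * (∏ k ∈ Finset.range K, (1 + a k)) ≤ 1 := by
      rw [← Finset.prod_mul_distrib]
      refine Finset.prod_le_one (fun _ _ => zero_le) (fun k _ => ?_)
      calc (1 - a k) * (1 + a k) = (1 - a k) + (1 - a k) * a k := by ring
        _ ≤ (1 - a k) + 1 * a k := by gcongr; exact tsub_le_self
        _ = 1 := by rw [one_mul, tsub_add_cancel_of_le (ha k)]
    have h2 : 1 + ∑ k ∈ Finset.range K, a k ≤ ∏ k ∈ Finset.range K, (1 + a k) := by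
      clear h1
      induction K with
      | zero => simp
      | succ n ih =>
        rw [Finset.prod_range_succ, Finset.sum_range_succ]
        calc 1 + (∑ k ∈ Finset.range n, a k + a n)
            ≤ (1 + ∑ k ∈ Finset.range n, a k) * (1 + a n) := by
              rw [mul_add, mul_one]
              rw [add_mul, one_mul]
              calc 1 + (∑ k ∈ Finset.range n, a k + a n)
                  = (1 + ∑ k ∈ Finset.range n, a k) + a n := by ring
                _ ≤ (1 + ∑ k ∈ Finset.range n, a k) + (a n + ∑ k ∈ Finset.range n, a k * a n) := by
                    gcongr; exact le_self_add
                _ = (1 + ∑ k ∈ Finset.range n, a k) + (a n + (∑ k ∈ Finset.range n, a k) * a n) := by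
                    rw [Finset.sum_mul]
          _ ≤ _ := by gcongr
    calc (∏ k ∈ Finset.range K, (1 - a k))
        ≤ (∏ k ∈ Finset.range K, (1 + a k))⁻¹ := ENNReal.le_inv_iff_mul_le.mpr h1
      _ ≤ (1 + ∑ k ∈ Finset.range K, a k)⁻¹ := ENNReal.inv_le_inv.mpr h2
  have hs : Filter.Tendsto (fun K => (1 + ∑ k ∈ Finset.range K, a k)⁻¹) atTop (nhds 0) := by
    have h1 : Filter.Tendsto (fun K => ∑ k ∈ Finset.range K, a k) atTop (nhds ⊤) := by
      rw [← h]; exact ENNReal.tendsto_nat_tsum a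
    have h2 : Filter.Tendsto (fun K => 1 + ∑ k ∈ Finset.range K, a k) atTop (nhds ⊤) := by
      simpa using Filter.Tendsto.const_add 1 h1
    have h3 := (ENNReal.tendsto_inv_iff).mpr h2
    simpa using h3
  exact tendsto_of_tendsto_of_tendsto_of_le_of_le tendsto_const_nhds hs
    (fun K => zero_le) key

section h3
variable {Ω : Type*} [MeasurableSpace Ω] {P : Measure Ω} [IsProbabilityMeasure P]
  {p : ℕ → ℝ} {ξ : ℕ → Ω → Bool}

lemma part1a (hξ : IsBernoulliSeq P p ξ) {ℓ : ℕ} (hℓ : 1 ≤ ℓ)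
    (hq : (∑' i : ℕ, if 1 ≤ i then ENNReal.ofReal (1 - p i) else 0) ≠ ⊤) :
    P {ω | runTime ξ ℓ ω = ⊤} = 0 := by
  set F : ℕ → Set Ω := fun i => if 1 ≤ i then {ω | ξ i ω = false} else ∅ with hF
  have hFe : ∀ i, P (F i) = if 1 ≤ i then ENNReal.ofReal (1 - p i) else 0 := by
    intro i
    by_cases h : 1 ≤ i
    · simp only [hF, if_pos h, prob_false hξ h]
    · simp only [hF, if_neg h, measure_empty]
  have hsum : ∑' i, P (F i) ≠ ⊤ := by rw [tsum_congr hFe]; exact hq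
  have hlim := MeasureTheory.measure_limsup_atTop_eq_zero hsum
  refine le_antisymm ?_ zero_le
  rw [← hlim]
  refine measure_mono ?_
  intro ω hω
  rw [mem_setOf_eq, runTime_eq_top_iff] at hω
  rw [limsup_eq_iInf_iSup_of_nat]
  simp only [iInf_eq_iInter, iSup_eq_iUnion, mem_iInter, mem_iUnion]
  intro n
  obtain ⟨j, hj, hfalse⟩ := hω (max n 1) (le_max_right n 1)
  refine ⟨max n 1 + j, ⟨by omega, ?_⟩⟩
  simp only [hF, if_pos (show 1 ≤ max n 1 + j by omega), mem_setOf_eq]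
  exact hfalse

lemma part1b (hξ : IsBernoulliSeq P p ξ) {ℓ : ℕ} (hℓ : 1 ≤ ℓ)
    (hI : (∑' i : ℕ, if 1 ≤ i then
        ENNReal.ofReal ((1 - p i) * ∏ j ∈ Finset.Icc (i + 1) (i + ℓ), p j) else 0) = ⊤) :
    P {ω | runTime ξ ℓ ω = ⊤} = 0 := by
  have hg : (∑' i : ℕ, if 1 ≤ i then P (runA ξ ℓ i) else 0) = ⊤ := by
    rw [← hI]
    refine tsum_congr fun i => ?_
    by_cases h : 1 ≤ i
    · simp only [if_pos h, prob_runA' hξ h]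
    · simp only [if_neg h]
  set g : ℕ → ℝ≥0∞ := fun i => if 1 ≤ i then P (runA ξ ℓ i) else 0 with hgdef
  have hshift : (∑' i : ℕ, P (runA ξ ℓ (i + 1))) = ⊤ := by
    have h0 : (∑' i : ℕ, g i) = g 0 + ∑' i, g (i + 1) := tsum_eq_zero_add' ENNReal.summable
    have : ∀ i : ℕ, g (i + 1) = P (runA ξ ℓ (i + 1)) := fun i => if_pos (by omega)
    rw [hg, hgdef] at h0
    simp only [if_neg (by omega : ¬ (1:ℕ) ≤ 0), zero_add] at h0
    rw [← tsum_congr this, ← h0]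
  set N := ℓ + 1 with hN
  haveI : NeZero N := ⟨by omega⟩
  -- split into residue classes
  have hsplit : (∑' r : Fin N, ∑' k : ℕ, P (runA ξ ℓ (k * N + (r : ℕ) + 1))) = ⊤ := by
    have he := Equiv.tsum_eq (Nat.divModEquiv N).symm (fun i => P (runA ξ ℓ (i + 1)))
    rw [hshift] at he
    have he2 : (∑' x : ℕ × Fin N, P (runA ξ ℓ (x.1 * N + (x.2 : ℕ) + 1))) = ⊤ := by
      rw [← he]
      exact tsum_congr fun x => by simp [Nat.divModEquiv]
    rw [ENNReal.tsum_prod'] at he2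
    rw [ENNReal.tsum_comm] at he2
    exact he2
  have hex : ∃ r : Fin N, (∑' k : ℕ, P (runA ξ ℓ (k * N + (r : ℕ) + 1))) = ⊤ := by
    by_contra hc
    push_neg at hc
    rw [tsum_fintype] at hsplit
    exact absurd hsplit (ENNReal.sum_lt_top.mpr fun r _ => lt_top_iff_ne_top.mpr (hc r)).ne
  obtain ⟨r, hr⟩ := hex
  set idx : ℕ → ℕ := fun k => k * N + (r : ℕ) + 1 with hidx
  have hwin : ∀ k K : ℕ, k < K → idx k + ℓ < idx K := by
    intro k K hkK
    have h1 : (k + 1) * N ≤ K * N := Nat.mul_le_mul_right N hkK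
    have h2 : k * N + ℓ < (k + 1) * N := by
      rw [add_mul, one_mul]; omega
    simp only [hidx]; omega
  have hprod : ∀ K, P (⋂ k ∈ Finset.range K, (runA ξ ℓ (idx k))ᶜ)
      = ∏ k ∈ Finset.range K, (1 - P (runA ξ ℓ (idx k))) := by
    intro K
    induction K with
    | zero => simp
    | succ K ih =>
      rw [Finset.range_add_one, Finset.set_biInter_insert,
        Finset.prod_insert Finset.notMem_range_self]
      have hdep1 : depOn ξ ((runA ξ ℓ (idx K))ᶜ) (Finset.Icc (idx K) (idx K + ℓ)) :=
        depOn_compl depOn_runA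
      have hdep2 : depOn ξ (⋂ k ∈ Finset.range K, (runA ξ ℓ (idx k))ᶜ)
          (Finset.range (idx K)) := by
        refine depOn_biInter fun k hk => depOn_compl (depOn_mono ?_ depOn_runA)
        intro m hm
        rw [Finset.mem_Icc] at hm
        rw [Finset.mem_range]
        have := hwin k K (Finset.mem_range.mp hk)
        omega
      have hdisj : Disjoint (Finset.Icc (idx K) (idx K + ℓ)) (Finset.range (idx K)) := by
        rw [Finset.disjoint_left]
        intro m hm hm2
        rw [Finset.mem_Icc] at hm
        rw [Finset.mem_range] at hm2
        omega
      rw [depOn_indep hξ hdisj hdep1 hdep2, ih,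
        prob_compl_eq_one_sub (runA_measurable hξ.meas ℓ (idx K))]
  have hle : ∀ K, P {ω | runTime ξ ℓ ω = ⊤}
      ≤ ∏ k ∈ Finset.range K, (1 - P (runA ξ ℓ (idx k))) := by
    intro K
    rw [← hprod]
    refine measure_mono fun ω hω => ?_
    rw [mem_iInter₂]
    intro k _
    exact fun hA => runA_subset_ne_top hℓ hA hω
  have htend := prod_one_sub_tendsto (fun k => P (runA ξ ℓ (idx k)))
    (fun k => prob_le_one) hr
  exact le_antisymm (ge_of_tendsto' htend hle) zero_le

end h3

section h4
variable {Ω : Type*} [MeasurableSpace Ω] {P : Measure Ω} [IsProbabilityMeasure P]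
  {p : ℕ → ℝ} {ξ : ℕ → Ω → Bool}

/-- given a zero at `i` and a run starting at `i+1`, the event `runA i` holds -/
lemma mem_runA {ℓ i : ℕ} {ω : Ω} (h0 : ξ i ω = false)
    (hrun : ∀ j < ℓ, ξ (i + 1 + j) ω = true) : ω ∈ runA ξ ℓ i := by
  rw [runA, mem_iInter₂]
  intro m hm
  rw [Finset.mem_Icc] at hm
  by_cases hmi : m = i
  · subst hmi; simp [h0]
  · have h1 : i + 1 + (m - (i + 1)) = m := by omega
    have h2 : m - (i + 1) < ℓ := by omega
    simp only [mem_setOf_eq, if_neg hmi]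
    rw [← h1]
    exact hrun _ h2

lemma part2 (hξ : IsBernoulliSeq P p ξ) {ℓ : ℕ} (hℓ : 1 ≤ ℓ)
    (hI : (∑' i : ℕ, if 1 ≤ i then
        ENNReal.ofReal ((1 - p i) * ∏ j ∈ Finset.Icc (i + 1) (i + ℓ), p j) else 0) ≠ ⊤)
    (hq : (∑' i : ℕ, if 1 ≤ i then ENNReal.ofReal (1 - p i) else 0) = ⊤) :
    0 < P {ω | runTime ξ ℓ ω = ⊤} := by
  classical
  set f : ℕ → ℝ≥0∞ := fun i => if 1 ≤ i then P (runA ξ ℓ i) else 0 with hfdef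
  have hf : (∑' i : ℕ, f i) ≠ ⊤ := by
    have : ∀ i : ℕ, f i = if 1 ≤ i then
        ENNReal.ofReal ((1 - p i) * ∏ j ∈ Finset.Icc (i + 1) (i + ℓ), p j) else 0 := by
      intro i
      by_cases h : 1 ≤ i
      · simp only [hfdef, if_pos h, prob_runA' hξ h]
      · simp only [hfdef, if_neg h]
    rw [tsum_congr this]
    exact hI
  set q : ℕ → ℝ≥0∞ := fun i => if 1 ≤ i then ENNReal.ofReal (1 - p i) else 0 with hqdef
  -- tails of f are eventually small
  have htail := ENNReal.tendsto_sum_nat_add f hf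
  have hev : ∀ᶠ n in atTop, (∑' k : ℕ, f (k + n)) < 4⁻¹ :=
    htail.eventually_lt_const (by norm_num)
  obtain ⟨M₁, hM₁⟩ := eventually_atTop.mp hev
  set M₂ := max M₁ 1 with hM₂
  -- find M ≥ M₂ with small continuation product
  have hex : ∃ M, M₂ ≤ M ∧
      (∏ m ∈ Finset.Icc (M + 1) (M + ℓ), P {ω | ξ m ω = true}) < 4⁻¹ := by
    by_contra hc
    push_neg at hc
    -- tail of q is infinite
    have hqtail : (∑' k : ℕ, q (k + M₂)) = ⊤ := by
      by_contra hq2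
      have := Summable.sum_add_tsum_nat_add' (f := q) (k := M₂) ENNReal.summable
      rw [hq] at this
      have hhead : (∑ i ∈ Finset.range M₂, q i) ≠ ⊤ := by
        refine (ENNReal.sum_lt_top.mpr fun i _ => ?_).ne
        by_cases h : 1 ≤ i
        · simp only [hqdef, if_pos h]; exact ENNReal.ofReal_lt_top
        · simp only [hqdef, if_neg h]; exact ENNReal.zero_lt_top
      rw [ENNReal.add_eq_top] at this
      rcases this with h | h
      · exact hhead h
      · exact hq2 h
    -- but then the tail of f is infinite
    apply hf
    have hle : ∀ k : ℕ, q (k + M₂) * 4⁻¹ ≤ f (k + M₂) := by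
      intro k
      have h1 : 1 ≤ k + M₂ := by omega
      simp only [hfdef, hqdef, if_pos h1]
      rw [prob_runA hξ h1, ← prob_false hξ h1]
      exact mul_le_mul_right (hc (k + M₂) (by omega)) _
    have h2 : (⊤ : ℝ≥0∞) ≤ ∑' k : ℕ, f (k + M₂) := by
      calc (⊤ : ℝ≥0∞) = (∑' k : ℕ, q (k + M₂)) * 4⁻¹ := by
            rw [hqtail, ENNReal.top_mul (by norm_num)]
        _ = ∑' k : ℕ, q (k + M₂) * 4⁻¹ := (ENNReal.tsum_mul_right).symm
        _ ≤ ∑' k : ℕ, f (k + M₂) := ENNReal.tsum_le_tsum hle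
    have h3 : (∑' k : ℕ, f (k + M₂)) ≤ ∑' i, f i := by
      rw [← Summable.sum_add_tsum_nat_add' (f := f) (k := M₂) ENNReal.summable]
      exact le_add_self
    exact top_le_iff.mp (h2.trans h3)
  obtain ⟨M, hM₂M, hrP⟩ := hex
  have hM1 : 1 ≤ M := le_trans (le_max_right _ _) hM₂M
  have hMM₁ : M₁ ≤ M := le_trans (le_max_left _ _) hM₂M
  set Z := ⋂ i ∈ Finset.Icc 1 M, {ω | ξ i ω = false} with hZdef
  have hPZ : P Z = ∏ i ∈ Finset.Icc 1 M, P {ω | ξ i ω = false} :=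
    meas_biInter_eq hξ _ (fun _ => false)
  have hZpos : 0 < P Z := by
    rw [hPZ]
    refine CanonicallyOrderedAdd.prod_pos.mpr fun i hi => ?_
    have h1 : 1 ≤ i := (Finset.mem_Icc.mp hi).1
    rw [prob_false hξ h1]
    exact ENNReal.ofReal_pos.mpr (by linarith [(hξ.range i h1).2])
  have hZtop : P Z ≠ ⊤ := measure_ne_top _ _
  have hZdep : depOn ξ Z (Finset.Icc 1 M) := depOn_biInter fun i hi => depOn_mem hi
  set E := Z \ ⋃ k : ℕ, runA ξ ℓ (M + k) with hEdef
  -- E entails no run ever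
  have hEsub : E ⊆ {ω | runTime ξ ℓ ω = ⊤} := by
    rintro ω ⟨hωZ, hωU⟩
    rw [mem_setOf_eq, runTime_eq_top_iff]
    by_contra hcon
    push_neg at hcon
    obtain ⟨n₀, hn₀1, hn₀r⟩ := hcon
    have hQ : ∃ n, 1 ≤ n ∧ ∀ j < ℓ, ξ (n + j) ω = true := by
      refine ⟨n₀, hn₀1, fun j hj => ?_⟩
      have := hn₀r j hj
      cases hb : ξ (n₀ + j) ω
      · exact absurd hb this
      · rfl
    set n := Nat.find hQ with hn
    obtain ⟨hn1, hrun⟩ := Nat.find_spec hQ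
    have hZmem : ∀ i, 1 ≤ i → i ≤ M → ξ i ω = false := by
      intro i h1 h2
      exact mem_iInter₂.mp hωZ i (Finset.mem_Icc.mpr ⟨h1, h2⟩)
    by_cases hnM : n ≤ M
    · have h1 := hZmem n hn1 hnM
      have h2 := hrun 0 (by omega)
      rw [Nat.add_zero] at h2
      rw [h2] at h1
      cases h1
    · -- n > M; the previous index carries a zero
      push_neg at hnM
      have hi0 : ξ (n - 1) ω = false := by
        by_cases hie : n - 1 ≤ M
        · exact hZmem (n - 1) (by omega) hie
        · by_contra hb
          have htrue : ξ (n - 1) ω = true := by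
            cases hbb : ξ (n - 1) ω
            · exact absurd hbb hb
            · rfl
          have hQ' : 1 ≤ n - 1 ∧ ∀ j < ℓ, ξ ((n - 1) + j) ω = true := by
            refine ⟨by omega, fun j hj => ?_⟩
            rcases Nat.eq_zero_or_pos j with hj0 | hjpos
            · subst hj0; rw [Nat.add_zero]; exact htrue
            · have : (n - 1) + j = n + (j - 1) := by omega
              rw [this]
              exact hrun (j - 1) (by omega)
          exact Nat.find_min hQ (by omega : n - 1 < n) hQ'
      have hrA : ω ∈ runA ξ ℓ (n - 1) := by
        refine mem_runA hi0 fun j hj => ?_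
        have : (n - 1) + 1 + j = n + j := by omega
        rw [this]
        exact hrun j hj
      have : ω ∈ ⋃ k : ℕ, runA ξ ℓ (M + k) := by
        refine mem_iUnion.mpr ⟨n - 1 - M, ?_⟩
        have : M + (n - 1 - M) = n - 1 := by omega
        rw [this]
        exact hrA
      exact hωU this
  -- lower bound on P E
  have hcover : Z ⊆ E ∪ ⋃ k : ℕ, (Z ∩ runA ξ ℓ (M + k)) := by
    intro ω hω
    by_cases h : ω ∈ ⋃ k : ℕ, runA ξ ℓ (M + k)
    · right
      obtain ⟨k, hk⟩ := mem_iUnion.mp h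
      exact mem_iUnion.mpr ⟨k, ⟨hω, hk⟩⟩
    · left
      exact ⟨hω, h⟩
  have hbound : P Z ≤ P E + ∑' k : ℕ, P (Z ∩ runA ξ ℓ (M + k)) :=
    le_trans (measure_mono hcover)
      (le_trans (measure_union_le _ _) (add_le_add_right (measure_iUnion_le _) _))
  -- the k = 0 term
  have hk0 : P (Z ∩ runA ξ ℓ (M + 0)) ≤ P Z * 4⁻¹ := by
    rw [Nat.add_zero]
    have hsub : Z ∩ runA ξ ℓ M
        ⊆ Z ∩ ⋂ m ∈ Finset.Icc (M + 1) (M + ℓ), {ω | ξ m ω = true} := by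
      refine inter_subset_inter_right _ fun ω hω => ?_
      rw [mem_iInter₂]
      intro m hm
      rw [Finset.mem_Icc] at hm
      have h1 := mem_iInter₂.mp hω m (Finset.mem_Icc.mpr ⟨by omega, hm.2⟩)
      simpa only [mem_setOf_eq, if_neg (by omega : m ≠ M)] using h1
    have hdisj : Disjoint (Finset.Icc 1 M) (Finset.Icc (M + 1) (M + ℓ)) := by
      rw [Finset.disjoint_left]
      intro m hm hm2
      rw [Finset.mem_Icc] at hm hm2
      omega
    have hdep2 : depOn ξ (⋂ m ∈ Finset.Icc (M + 1) (M + ℓ), {ω | ξ m ω = true})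
        (Finset.Icc (M + 1) (M + ℓ)) := depOn_biInter fun m hm => depOn_mem hm
    calc P (Z ∩ runA ξ ℓ M) ≤ P (Z ∩ ⋂ m ∈ Finset.Icc (M + 1) (M + ℓ), {ω | ξ m ω = true}) :=
          measure_mono hsub
      _ = P Z * P (⋂ m ∈ Finset.Icc (M + 1) (M + ℓ), {ω | ξ m ω = true}) :=
          depOn_indep hξ hdisj hZdep hdep2
      _ = P Z * ∏ m ∈ Finset.Icc (M + 1) (M + ℓ), P {ω | ξ m ω = true} := by
          rw [meas_biInter_eq hξ _ (fun _ => true)]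
      _ ≤ P Z * 4⁻¹ := mul_le_mul_right hrP.le _
  -- the k ≥ 1 terms
  have hk1 : ∀ k : ℕ, P (Z ∩ runA ξ ℓ (M + (k + 1))) = P Z * f (M + (k + 1)) := by
    intro k
    have hdisj : Disjoint (Finset.Icc 1 M) (Finset.Icc (M + (k + 1)) (M + (k + 1) + ℓ)) := by
      rw [Finset.disjoint_left]
      intro m hm hm2
      rw [Finset.mem_Icc] at hm hm2
      omega
    rw [depOn_indep hξ hdisj hZdep depOn_runA]
    congr 1
  have hsum1 : (∑' k : ℕ, P (Z ∩ runA ξ ℓ (M + (k + 1)))) ≤ P Z * 4⁻¹ := by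
    have h1 : ∀ k : ℕ, P (Z ∩ runA ξ ℓ (M + (k + 1))) = P Z * f (k + (M + 1)) := by
      intro k
      rw [hk1 k]
      congr 2
      omega
    rw [tsum_congr h1, ENNReal.tsum_mul_left]
    exact mul_le_mul_right (hM₁ (M + 1) (by omega)).le _
  -- combine
  have hsplit : (∑' k : ℕ, P (Z ∩ runA ξ ℓ (M + k)))
      = P (Z ∩ runA ξ ℓ (M + 0)) + ∑' k : ℕ, P (Z ∩ runA ξ ℓ (M + (k + 1))) :=
    tsum_eq_zero_add' ENNReal.summable
  have hfinal : P Z ≤ P E + (P Z * 4⁻¹ + P Z * 4⁻¹) := by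
    refine hbound.trans ?_
    rw [hsplit]
    exact add_le_add_right (add_le_add hk0 hsum1) _
  -- conclude positivity
  have hEpos : 0 < P E := by
    rcases (zero_le (a := P E)).lt_or_eq with h | h
    · exact h
    · exfalso
      rw [← h, zero_add] at hfinal
      have h4 : (4 : ℝ≥0∞)⁻¹ + 4⁻¹ = 2⁻¹ := by
        rw [(by norm_num : (4 : ℝ≥0∞) = 2 * 2), ENNReal.mul_inv (by norm_num) (by norm_num),
          ← add_mul, ENNReal.inv_two_add_inv_two, one_mul]
      have h2 : P Z * 4⁻¹ + P Z * 4⁻¹ = P Z / 2 := by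
        rw [← mul_add, h4, div_eq_mul_inv]
      rw [h2] at hfinal
      exact absurd hfinal (not_le.mpr (ENNReal.half_lt_self hZpos.ne' hZtop))
  exact hEpos.trans_le (measure_mono hEsub)

end h4


/-- Corollary 7.1(ii): if `∑ q_i < ∞` or `I = ∑_{i≥1} q_i ∏_{j=i+1}^{i+ℓ} p_j = ∞`
then `D < ∞` a.s.; otherwise (`I < ∞` and `∑ q_i = ∞`) `P(D = ∞) > 0`. -/
theorem stmt_17 {Ω : Type*} [MeasurableSpace Ω] (P : Measure Ω) [IsProbabilityMeasure P]
    (p : ℕ → ℝ) (ξ : ℕ → Ω → Bool) (hξ : IsBernoulliSeq P p ξ)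
    (ℓ : ℕ) (hℓ : 1 ≤ ℓ) :
    (((∑' i : ℕ, if 1 ≤ i then ENNReal.ofReal (1 - p i) else 0) ≠ ⊤ ∨
      (∑' i : ℕ, if 1 ≤ i then
        ENNReal.ofReal ((1 - p i) * ∏ j ∈ Finset.Icc (i + 1) (i + ℓ), p j) else 0) = ⊤) →
      P {ω | runTime ξ ℓ ω = ⊤} = 0) ∧
    (((∑' i : ℕ, if 1 ≤ i then
        ENNReal.ofReal ((1 - p i) * ∏ j ∈ Finset.Icc (i + 1) (i + ℓ), p j) else 0) ≠ ⊤ ∧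
      (∑' i : ℕ, if 1 ≤ i then ENNReal.ofReal (1 - p i) else 0) = ⊤) →
      0 < P {ω | runTime ξ ℓ ω = ⊤}) := by
  constructor
  · rintro (h | h)
    · exact part1a hξ hℓ h
    · exact part1b hξ hℓ h
  · rintro ⟨h1, h2⟩
    exact part2 hξ hℓ h1 h2
end
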